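/- Let D = dℓ² be a positive discriminant that is not a perfect square, with d fundamental and ℓ > 0. Then L(1,ψ_D) = L(1,ψ_d) · (1/ℓ) · ∏_{p | ℓ} [1 + (p - ψ_d(p)) · ((ℓ, p^∞) - 1)/(p - 1)], where (ℓ, p^∞) = p^{ord_p(ℓ)}. -/

import Mathlib

/-- The Kronecker symbol at a prime `p`. -/
def kronP (d : ℤ) (p : ℕ) : ℤ :=
  if p = 2 then (if d % 2 = 0 then 0 else if d % 8 = 1 ∨ d % 8 = 7 then 1 else -1)
  else jacobiSym d p

/-- The Kronecker symbol `(d / n)` for `n ≥ 1`. -/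
def kron (d : ℤ) (n : ℕ) : ℤ :=
  ((n.primeFactorsList).map (kronP d)).prod

/-- `d` is a fundamental discriminant. -/
def IsFundamentalDiscriminant (d : ℤ) : Prop :=
  (d % 4 = 1 ∧ Squarefree d) ∨
  (d % 4 = 0 ∧ Squarefree (d / 4) ∧ (d / 4 % 4 = 2 ∨ d / 4 % 4 = 3))

lemma kron_one (d : ℤ) : kron d 1 = 1 := by unfold kron; simp

lemma kron_mul (d : ℤ) {a b : ℕ} (ha : a ≠ 0) (hb : b ≠ 0) :
    kron d (a * b) = kron d a * kron d b := by
  unfold kron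
  rw [((Nat.perm_primeFactorsList_mul ha hb).map (kronP d)).prod_eq, List.map_append,
    List.prod_append]

lemma kron_prime (d : ℤ) {p : ℕ} (hp : p.Prime) : kron d p = kronP d p := by
  unfold kron
  rw [Nat.primeFactorsList_prime hp]
  simp

lemma kron_prime_pow (d : ℤ) {p : ℕ} (hp : p.Prime) (a : ℕ) :
    kron d (p ^ a) = (kronP d p) ^ a := by
  induction a with
  | zero => simp [kron_one]
  | succ n ih => rw [pow_succ, kron_mul d (pow_ne_zero _ hp.pos.ne') hp.pos.ne', ih,
      kron_prime d hp, pow_succ]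

/-- The finite "correction" multiplicative function. -/
def Hfun (d : ℤ) (k : ℕ) : ℤ := ∏ p ∈ k.primeFactors, (1 - kronP d p)

lemma Hfun_one (d : ℤ) : Hfun d 1 = 1 := by unfold Hfun; simp

lemma Hfun_mul (d : ℤ) {a b : ℕ} (ha : a ≠ 0) (hb : b ≠ 0) (hab : a.Coprime b) :
    Hfun d (a * b) = Hfun d a * Hfun d b := by
  unfold Hfun
  rw [Nat.primeFactors_mul ha hb, Finset.prod_union hab.disjoint_primeFactors]

lemma Hfun_prime_pow (d : ℤ) {p : ℕ} (hp : p.Prime) {a : ℕ} (ha : a ≠ 0) :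
    Hfun d (p ^ a) = 1 - kronP d p := by
  unfold Hfun
  rw [Nat.primeFactors_prime_pow ha hp]
  simp

/-- `Hfun` as an arithmetic function. -/
def AH (d : ℤ) : ArithmeticFunction ℤ := ⟨fun k => if k = 0 then 0 else Hfun d k, by simp⟩

/-- `kron` as an arithmetic function. -/
def AK (d : ℤ) : ArithmeticFunction ℤ := ⟨fun k => if k = 0 then 0 else kron d k, by simp⟩

lemma AH_apply (d : ℤ) {k : ℕ} (hk : k ≠ 0) : AH d k = Hfun d k := if_neg hk
lemma AK_apply (d : ℤ) {k : ℕ} (hk : k ≠ 0) : AK d k = kron d k := if_neg hk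

lemma AH_mult (d : ℤ) : (AH d).IsMultiplicative := by
  constructor
  · rw [AH_apply d one_ne_zero, Hfun_one]
  · intro m n hmn
    rcases eq_or_ne m 0 with rfl | hm
    · have : n = 1 := by simpa using hmn.symm
      subst this; simp [AH]
    rcases eq_or_ne n 0 with rfl | hn
    · have : m = 1 := by simpa [Nat.Coprime] using hmn
      subst this; simp [AH]
    rw [AH_apply d (mul_ne_zero hm hn), AH_apply d hm, AH_apply d hn, Hfun_mul d hm hn hmn]

lemma AK_mult (d : ℤ) : (AK d).IsMultiplicative := by
  constructor
  · rw [AK_apply d one_ne_zero, kron_one]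
  · intro m n hmn
    rcases eq_or_ne m 0 with rfl | hm
    · have : n = 1 := by simpa using hmn.symm
      subst this; simp [AK]
    rcases eq_or_ne n 0 with rfl | hn
    · have : m = 1 := by simpa [Nat.Coprime] using hmn
      subst this; simp [AK]
    rw [AK_apply d (mul_ne_zero hm hn), AK_apply d hm, AK_apply d hn, kron_mul d hm hn]

lemma telescope (χ : ℤ) (a : ℕ) :
    χ ^ a + (1 - χ) * ∑ j ∈ Finset.range a, χ ^ j = 1 := by
  induction a with
  | zero => simp
  | succ n ih =>
    rw [Finset.sum_range_succ, pow_succ]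
    ring_nf
    ring_nf at ih
    linarith [ih]

lemma conv_prime_pow (d : ℤ) {p : ℕ} (hp : p.Prime) (a : ℕ) :
    (AH d * AK d) (p ^ a) = 1 := by
  rw [ArithmeticFunction.mul_apply,
    Nat.sum_divisorsAntidiagonal (fun x y => AH d x * AK d y),
    Nat.divisors_prime_pow hp, Finset.sum_map]
  simp only [Function.Embedding.coeFn_mk]
  have hpne : p ≠ 0 := hp.pos.ne'
  have key : ∀ j ∈ Finset.range (a + 1),
      AH d (p ^ j) * AK d (p ^ a / p ^ j) =
      (if j = 0 then (1:ℤ) else 1 - kronP d p) * (kronP d p) ^ (a - j) := by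
    intro j hj
    rw [Finset.mem_range] at hj
    have hdiv : p ^ a / p ^ j = p ^ (a - j) := Nat.pow_div (by omega) hp.pos
    rw [hdiv, AH_apply d (pow_ne_zero _ hpne), AK_apply d (pow_ne_zero _ hpne),
      kron_prime_pow d hp]
    rcases eq_or_ne j 0 with rfl | hj0
    · simp [Hfun_one]
    · rw [Hfun_prime_pow d hp hj0, if_neg hj0]
  rw [Finset.sum_congr rfl key, Finset.sum_range_succ' _ a]
  simp only [if_neg (Nat.succ_ne_zero _), if_pos rfl, Nat.sub_zero, one_mul]
  rw [← Finset.mul_sum]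
  have hr : ∑ j ∈ Finset.range a, (kronP d p) ^ (a - (j + 1)) =
      ∑ j ∈ Finset.range a, (kronP d p) ^ j := by
    rw [← Finset.sum_range_reflect]
    apply Finset.sum_congr rfl
    intro j hj
    rw [Finset.mem_range] at hj
    congr 1
    omega
  rw [hr, add_comm, if_pos trivial, one_mul]
  exact telescope _ a

lemma conv_eq_one (d : ℤ) {g : ℕ} (hg : g ≠ 0) : (AH d * AK d) g = 1 := by
  rw [((AH_mult d).mul (AK_mult d)).multiplicative_factorization _ hg]
  refine (Finsupp.prod_congr (g2 := fun _ _ => 1) ?_).trans (by simp [Finsupp.prod])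
  intro p hp
  exact conv_prime_pow d
    (Nat.prime_of_mem_primeFactors (by rwa [← Nat.support_factorization])) _

lemma sum_div_eq_one (d : ℤ) {g : ℕ} (hg : g ≠ 0) :
    ∑ k ∈ g.divisors, Hfun d k * kron d (g / k) = 1 := by
  have := conv_eq_one d hg
  rw [ArithmeticFunction.mul_apply,
    Nat.sum_divisorsAntidiagonal (fun x y => AH d x * AK d y)] at this
  rw [← this]
  apply Finset.sum_congr rfl
  intro k hk
  rw [Nat.mem_divisors] at hk
  have hk0 : k ≠ 0 := by rintro rfl; exact hg (Nat.eq_zero_of_zero_dvd hk.1)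
  have hgk : g / k ≠ 0 := Nat.div_ne_zero_iff_of_dvd hk.1 |>.mpr ⟨hg, hk0⟩
  rw [AH_apply d hk0, AK_apply d hgk]

lemma pointwise (d : ℤ) (ℓ : ℕ) (hℓ : ℓ ≠ 0) {m : ℕ} (hm : m ≠ 0) :
    ∑ k ∈ ℓ.divisors.filter (· ∣ m), Hfun d k * kron d (m / k)
      = kron d (m / Nat.gcd m ℓ) := by
  set g := Nat.gcd m ℓ with hgdef
  have hg : g ≠ 0 := Nat.gcd_ne_zero_left hm
  have hset : ℓ.divisors.filter (· ∣ m) = g.divisors := by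
    ext k
    simp only [Finset.mem_filter, Nat.mem_divisors, hgdef]
    constructor
    · rintro ⟨⟨h1, _⟩, h2⟩; exact ⟨Nat.dvd_gcd h2 h1, hg⟩
    · rintro ⟨h, _⟩
      exact ⟨⟨h.trans (Nat.gcd_dvd_right _ _), hℓ⟩, h.trans (Nat.gcd_dvd_left _ _)⟩
  rw [hset]
  have hgm : g ∣ m := Nat.gcd_dvd_left _ _
  have key : ∀ k ∈ g.divisors, Hfun d k * kron d (m / k)
      = kron d (m / g) * (Hfun d k * kron d (g / k)) := by
    intro k hk
    rw [Nat.mem_divisors] at hk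
    have hk0 : k ≠ 0 := by rintro rfl; exact hg (Nat.eq_zero_of_zero_dvd hk.1)
    obtain ⟨t, ht⟩ := hk.1
    obtain ⟨s, hs⟩ := hgm
    have ht0 : t ≠ 0 := by rintro rfl; simp at ht; exact hg ht
    have hs0 : s ≠ 0 := by rintro rfl; simp at hs; exact hm hs
    have h1 : m / k = s * t := by
      rw [hs, ht, mul_assoc, Nat.mul_div_cancel_left _ (Nat.pos_of_ne_zero hk0), mul_comm]
    have h2 : m / g = s := by rw [hs, Nat.mul_div_cancel_left _ (Nat.pos_of_ne_zero hg)]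
    have h3 : g / k = t := by rw [ht, Nat.mul_div_cancel_left _ (Nat.pos_of_ne_zero hk0)]
    rw [h1, h2, h3, kron_mul d hs0 ht0]
    ring
  rw [Finset.sum_congr rfl key, ← Finset.mul_sum, sum_div_eq_one d hg, mul_one]

lemma inner_reindex (k : ℕ) (hk : k ≠ 0) (N : ℕ) (F : ℕ → ℝ) :
    ∑ n ∈ (Finset.range N).filter (fun n => k ∣ n + 1), F ((n + 1) / k)
      = ∑ j ∈ Finset.range (N / k), F (j + 1) := by
  have hkpos : 0 < k := Nat.pos_of_ne_zero hk
  refine Finset.sum_nbij' (fun n => (n + 1) / k - 1) (fun j => k * (j + 1) - 1)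
    ?_ ?_ ?_ ?_ ?_
  · intro n hn
    rw [Finset.mem_filter, Finset.mem_range] at hn
    obtain ⟨hnN, q, hq⟩ := hn
    have hq0 : q ≠ 0 := by rintro rfl; omega
    rw [Finset.mem_range, hq, Nat.mul_div_cancel_left _ hkpos]
    have h4 : q * k = k * q := Nat.mul_comm _ _
    have : q ≤ N / k := (Nat.le_div_iff_mul_le hkpos).mpr (by omega)
    omega
  · intro j hj
    rw [Finset.mem_range] at hj
    have h1 : j + 1 ≤ N / k := hj
    have h2 : (j + 1) * k ≤ N := (Nat.le_div_iff_mul_le hkpos).mp h1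
    have h3 : 1 ≤ k * (j + 1) := Nat.one_le_iff_ne_zero.mpr (by positivity)
    have h4 : (j + 1) * k = k * (j + 1) := Nat.mul_comm _ _
    rw [Finset.mem_filter, Finset.mem_range]
    constructor
    · omega
    · have : k * (j + 1) - 1 + 1 = k * (j + 1) := by omega
      rw [this]; exact Dvd.intro _ rfl
  · intro n hn
    rw [Finset.mem_filter, Finset.mem_range] at hn
    obtain ⟨hnN, q, hq⟩ := hn
    have hq0 : q ≠ 0 := by rintro rfl; omega
    rw [hq, Nat.mul_div_cancel_left _ hkpos]
    have : q - 1 + 1 = q := by omega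
    rw [this]; omega
  · intro j hj
    have h3 : 1 ≤ k * (j + 1) := Nat.one_le_iff_ne_zero.mpr (by positivity)
    have : k * (j + 1) - 1 + 1 = k * (j + 1) := by omega
    rw [this, Nat.mul_div_cancel_left _ hkpos]
    omega
  · intro n hn
    rw [Finset.mem_filter, Finset.mem_range] at hn
    obtain ⟨hnN, q, hq⟩ := hn
    have hq0 : q ≠ 0 := by rintro rfl; omega
    rw [hq, Nat.mul_div_cancel_left _ hkpos]
    congr 1
    omega

lemma partial_eq (d : ℤ) {ℓ : ℕ} (hℓ : ℓ ≠ 0) (N : ℕ) :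
    ∑ n ∈ Finset.range N, (kron d ((n + 1) / Nat.gcd (n + 1) ℓ) : ℝ) / (n + 1)
      = ∑ k ∈ ℓ.divisors, ((Hfun d k : ℝ) / k) *
          ∑ j ∈ Finset.range (N / k), (kron d (j + 1) : ℝ) / (j + 1) := by
  have step1 : ∀ n ∈ Finset.range N,
      (kron d ((n + 1) / Nat.gcd (n + 1) ℓ) : ℝ) / (n + 1)
        = ∑ k ∈ ℓ.divisors, (if k ∣ n + 1 then
            ((Hfun d k : ℝ) / k) * ((kron d ((n + 1) / k) : ℝ) / (((n + 1) / k : ℕ) : ℝ))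
          else 0) := by
    intro n _
    rw [← Finset.sum_filter, ← pointwise d ℓ hℓ (Nat.succ_ne_zero n)]
    push_cast
    rw [Finset.sum_div]
    apply Finset.sum_congr rfl
    intro k hk
    rw [Finset.mem_filter, Nat.mem_divisors] at hk
    obtain ⟨⟨hkℓ, -⟩, hkm⟩ := hk
    have hk0 : k ≠ 0 := by rintro rfl; exact hℓ (Nat.eq_zero_of_zero_dvd hkℓ)
    have hm : ((n + 1 : ℕ) : ℝ) = (k : ℝ) * (((n + 1) / k : ℕ) : ℝ) := by
      rw [← Nat.cast_mul, Nat.mul_div_cancel' hkm]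
    push_cast at hm ⊢
    rw [hm, ← div_mul_div_comm]
  rw [Finset.sum_congr rfl step1, Finset.sum_comm]
  apply Finset.sum_congr rfl
  intro k hk
  rw [Nat.mem_divisors] at hk
  have hk0 : k ≠ 0 := by rintro rfl; exact hk.2 (Nat.eq_zero_of_zero_dvd hk.1)
  rw [← Finset.sum_filter, Finset.mul_sum]
  rw [inner_reindex k hk0 N
    (fun q => ((Hfun d k : ℝ) / k) * ((kron d q : ℝ) / (q : ℝ)))]
  exact Finset.sum_congr rfl fun j _ => by push_cast; ring

/-- `Hfun d k / k` as a real arithmetic function. -/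
noncomputable def AHr (d : ℤ) : ArithmeticFunction ℝ :=
  ⟨fun k => if k = 0 then 0 else (Hfun d k : ℝ) / k, by simp⟩

lemma AHr_apply (d : ℤ) {k : ℕ} (hk : k ≠ 0) : AHr d k = (Hfun d k : ℝ) / k := if_neg hk

lemma AHr_mult (d : ℤ) : (AHr d).IsMultiplicative := by
  constructor
  · rw [AHr_apply d one_ne_zero, Hfun_one]; norm_num
  · intro m n hmn
    rcases eq_or_ne m 0 with rfl | hm
    · have : n = 1 := by simpa using hmn.symm
      subst this; simp [AHr]
    rcases eq_or_ne n 0 with rfl | hn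
    · have : m = 1 := by simpa [Nat.Coprime] using hmn
      subst this; simp [AHr]
    rw [AHr_apply d (mul_ne_zero hm hn), AHr_apply d hm, AHr_apply d hn,
      Hfun_mul d hm hn hmn]
    push_cast
    rw [div_mul_div_comm]

lemma local_factor (d : ℤ) {p : ℕ} (hp : p.Prime) (e : ℕ) :
    (AHr d * ↑ArithmeticFunction.zeta) (p ^ e)
      = (1 / (p : ℝ) ^ e) *
        (1 + ((p : ℝ) - (kronP d p : ℝ)) * ((p : ℝ) ^ e - 1) / ((p : ℝ) - 1)) := by
  have hpne : p ≠ 0 := hp.pos.ne'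
  have hx2 : (2 : ℝ) ≤ (p : ℝ) := by exact_mod_cast hp.two_le
  have hx0 : (p : ℝ) ≠ 0 := by positivity
  have hx1 : (p : ℝ) - 1 ≠ 0 := by nlinarith
  have hxne1 : (p : ℝ) ≠ 1 := by nlinarith
  have hinvne1 : (1 : ℝ) / p ≠ 1 :=
    ne_of_lt (by rw [div_lt_one (by linarith)]; linarith)
  rw [ArithmeticFunction.mul_apply]
  simp only [ArithmeticFunction.natCoe_apply]
  rw [Nat.sum_divisorsAntidiagonal (fun x y => AHr d x * ((ArithmeticFunction.zeta y : ℕ) : ℝ)),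
    Nat.divisors_prime_pow hp, Finset.sum_map]
  simp only [Function.Embedding.coeFn_mk]
  have key : ∀ j ∈ Finset.range (e + 1),
      AHr d (p ^ j) * ((ArithmeticFunction.zeta (p ^ e / p ^ j) : ℕ) : ℝ)
        = (if j = 0 then (1:ℝ) else (1 - (kronP d p : ℝ)) / (p : ℝ) ^ j) := by
    intro j hj
    rw [Finset.mem_range] at hj
    have hdiv : p ^ e / p ^ j = p ^ (e - j) := Nat.pow_div (by omega) hp.pos
    rw [hdiv, ArithmeticFunction.zeta_apply, if_neg (pow_ne_zero _ hpne),
      AHr_apply d (pow_ne_zero _ hpne)]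
    rcases eq_or_ne j 0 with rfl | hj0
    · simp [Hfun_one]
    · rw [Hfun_prime_pow d hp hj0, if_neg hj0]
      push_cast
      ring
  rw [Finset.sum_congr rfl key, Finset.sum_range_succ' _ e, if_pos rfl,
    Finset.sum_congr rfl (fun j _ => if_neg (Nat.succ_ne_zero j))]
  have hgeom : ∀ j : ℕ, (1 - (kronP d p : ℝ)) / (p : ℝ) ^ (j + 1)
      = ((1 - (kronP d p : ℝ)) / p) * ((1 / (p : ℝ)) ^ j) := by
    intro j
    rw [div_pow, one_pow, div_mul_div_comm, mul_one, ← pow_succ']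
  rw [Finset.sum_congr rfl (fun j _ => hgeom j), ← Finset.mul_sum,
    geom_sum_eq hinvne1 e, div_pow, one_pow]
  have h1p : 1/(p:ℝ) - 1 ≠ 0 := sub_ne_zero.mpr hinvne1
  have h7 : (1:ℝ) - p ≠ 0 := by nlinarith
  have h6 : (p:ℝ) - (p:ℝ)^2 ≠ 0 := by nlinarith
  have hy0 : (p:ℝ)^e ≠ 0 := pow_ne_zero _ hx0
  rw [show 1/(p:ℝ) - 1 = (1 - p)/p by field_simp, div_div_eq_mul_div]
  field_simp
  ring

lemma const_eq (d : ℤ) {ℓ : ℕ} (hℓ : ℓ ≠ 0) :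
    ∑ k ∈ ℓ.divisors, (Hfun d k : ℝ) / k
      = (1 / (ℓ : ℝ)) * ∏ p ∈ ℓ.primeFactors,
          (1 + ((p : ℝ) - (kron d p : ℝ)) *
            ((p : ℝ) ^ (ℓ.factorization p) - 1) / ((p : ℝ) - 1)) := by
  have hmult : (AHr d * ↑ArithmeticFunction.zeta).IsMultiplicative :=
    (AHr_mult d).mul (ArithmeticFunction.IsMultiplicative.natCast ArithmeticFunction.isMultiplicative_zeta)
  have h1 : (AHr d * ↑ArithmeticFunction.zeta) ℓ = ∑ k ∈ ℓ.divisors, (Hfun d k : ℝ) / k := by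
    rw [ArithmeticFunction.mul_apply]
    simp only [ArithmeticFunction.natCoe_apply]
    rw [Nat.sum_divisorsAntidiagonal (fun x y => AHr d x * ((ArithmeticFunction.zeta y : ℕ) : ℝ))]
    apply Finset.sum_congr rfl
    intro k hk
    rw [Nat.mem_divisors] at hk
    have hk0 : k ≠ 0 := by rintro rfl; exact hℓ (Nat.eq_zero_of_zero_dvd hk.1)
    have hlk : ℓ / k ≠ 0 := Nat.div_ne_zero_iff_of_dvd hk.1 |>.mpr ⟨hℓ, hk0⟩
    rw [AHr_apply d hk0, ArithmeticFunction.zeta_apply, if_neg hlk]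
    norm_num
  rw [← h1, hmult.multiplicative_factorization _ hℓ, Finsupp.prod,
    Nat.support_factorization]
  have hprod : ∀ p ∈ ℓ.primeFactors,
      (AHr d * ↑ArithmeticFunction.zeta) (p ^ ℓ.factorization p)
        = (1 / (p : ℝ) ^ (ℓ.factorization p)) *
          (1 + ((p : ℝ) - (kron d p : ℝ)) *
            ((p : ℝ) ^ (ℓ.factorization p) - 1) / ((p : ℝ) - 1)) := by
    intro p hp
    have hpp := Nat.prime_of_mem_primeFactors hp
    rw [local_factor d hpp, kron_prime d hpp]
  rw [Finset.prod_congr rfl hprod, Finset.prod_mul_distrib]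
  congr 1
  have hcast : (ℓ : ℝ) = ∏ p ∈ ℓ.primeFactors, (p : ℝ) ^ (ℓ.factorization p) := by
    conv_lhs => rw [← Nat.factorization_prod_pow_eq_self hℓ]
    rw [Finsupp.prod, Nat.support_factorization]
    push_cast
    rfl
  rw [hcast]
  simp only [one_div]
  exact Finset.prod_inv_distrib _

lemma nat_div_tendsto {k : ℕ} (hk : 0 < k) :
    Filter.Tendsto (fun N : ℕ => N / k) Filter.atTop Filter.atTop :=
  Filter.tendsto_atTop_atTop.mpr fun b =>
    ⟨k * b, fun a ha => (Nat.le_div_iff_mul_le hk).mpr (by rw [Nat.mul_comm]; omega)⟩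

/-- Let `D = d ℓ²` be a positive non-square discriminant (`d` fundamental, `ℓ > 0`).
If the partial sums of `∑ ψ_d(n)/n` converge to `L(1, ψ_d)`, then the partial sums of
`∑ ψ_D(n)/n` converge to
`L(1, ψ_d) · ℓ⁻¹ · ∏_{p ∣ ℓ} [1 + (p - ψ_d(p)) ((ℓ, p^∞) - 1)/(p - 1)]`. -/
theorem stmt1 (D d : ℤ) (ℓ : ℕ) (hDpos : 0 < D) (hdisc : D % 4 = 0 ∨ D % 4 = 1)
    (hnsq : ¬ IsSquare D) (hd : IsFundamentalDiscriminant d) (hℓ : 0 < ℓ)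
    (hfac : D = d * (ℓ : ℤ) ^ 2) (L1d : ℝ)
    (hL : Filter.Tendsto (fun N => ∑ n ∈ Finset.range N, (kron d (n + 1) : ℝ) / (n + 1))
      Filter.atTop (nhds L1d)) :
    Filter.Tendsto
      (fun N => ∑ n ∈ Finset.range N,
        (kron d ((n + 1) / Nat.gcd (n + 1) ℓ) : ℝ) / (n + 1))
      Filter.atTop
      (nhds (L1d * (1 / (ℓ : ℝ)) *
        ∏ p ∈ ℓ.primeFactors,
          (1 + ((p : ℝ) - (kron d p : ℝ)) *
            ((p : ℝ) ^ (ℓ.factorization p) - 1) / ((p : ℝ) - 1)))) := by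
  have hℓ0 : ℓ ≠ 0 := hℓ.ne'
  have heq : (fun N => ∑ n ∈ Finset.range N,
      (kron d ((n + 1) / Nat.gcd (n + 1) ℓ) : ℝ) / (n + 1))
      = fun N => ∑ k ∈ ℓ.divisors, ((Hfun d k : ℝ) / k) *
          ∑ j ∈ Finset.range (N / k), (kron d (j + 1) : ℝ) / (j + 1) :=
    funext fun N => partial_eq d hℓ0 N
  rw [heq]
  have hlim : Filter.Tendsto
      (fun N => ∑ k ∈ ℓ.divisors, ((Hfun d k : ℝ) / k) *
          ∑ j ∈ Finset.range (N / k), (kron d (j + 1) : ℝ) / (j + 1))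
      Filter.atTop (nhds (∑ k ∈ ℓ.divisors, ((Hfun d k : ℝ) / k) * L1d)) := by
    apply tendsto_finset_sum
    intro k hk
    rw [Nat.mem_divisors] at hk
    have hk0 : 0 < k := Nat.pos_of_ne_zero (by rintro rfl; exact hℓ0 (Nat.eq_zero_of_zero_dvd hk.1))
    exact (hL.comp (nat_div_tendsto hk0)).const_mul _
  convert hlim using 2
  rw [← Finset.sum_mul, const_eq d hℓ0]
  ring
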